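/- Let f : ℝᵈ → ℝ be L-smooth (its gradient is L-Lipschitz), and suppose ‖F'(u)‖ ≤ β for all u, where f(u) = ½‖F(u)‖². Define u₊ = u − (JᵀJ + α·Id)⁻¹ ∇f(u) with J = F'(u) and α > 0. Then f(u₊) ≤ f(u) − p(α)‖∇f(u)‖², where p(α) = 1/(β²+α) − L/(2α²). -/

import Mathlib

open Matrix

section Aux

open RealInnerProductSpace

lemma descent_lemma {n : ℕ} (L : ℝ) (f : EuclideanSpace ℝ (Fin n) → ℝ)
    (hdiff : ∀ v, DifferentiableAt ℝ f v)
    (hLip : ∀ x y, ‖gradient f x - gradient f y‖ ≤ L * ‖x - y‖)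
    (x v : EuclideanSpace ℝ (Fin n)) :
    f (x + v) ≤ f x + ⟪gradient f x, v⟫ + L / 2 * ‖v‖ ^ 2 := by
  have hφ : ∀ t : ℝ, HasDerivAt (fun t : ℝ => f (x + t • v))
      ⟪gradient f (x + t • v), v⟫ t := by
    intro t
    have hc : HasDerivAt (fun t : ℝ => x + t • v) v t :=
      by simpa using ((hasDerivAt_id t).smul_const v).const_add x
    have hfd := ((hdiff (x + t • v)).hasGradientAt).hasFDerivAt
    have := hfd.comp_hasDerivAt t hc
    exact this
  set ψ : ℝ → ℝ := fun t =>
    f x + t * ⟪gradient f x, v⟫ + L / 2 * t ^ 2 * ‖v‖ ^ 2 - f (x + t • v) with hψdef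
  have hψ : ∀ t : ℝ, HasDerivAt ψ
      (⟪gradient f x, v⟫ + L / 2 * (2 * t) * ‖v‖ ^ 2 - ⟪gradient f (x + t • v), v⟫) t := by
    intro t
    have h1 : HasDerivAt (fun t : ℝ => f x + t * ⟪gradient f x, v⟫ + L / 2 * t ^ 2 * ‖v‖ ^ 2)
        (⟪gradient f x, v⟫ + L / 2 * (2 * t) * ‖v‖ ^ 2) t := by
      have ha : HasDerivAt (fun t : ℝ => t * ⟪gradient f x, v⟫) ⟪gradient f x, v⟫ t := by
        simpa using (hasDerivAt_id t).mul_const ⟪gradient f x, v⟫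
      have hb : HasDerivAt (fun t : ℝ => L / 2 * t ^ 2 * ‖v‖ ^ 2) (L / 2 * (2 * t) * ‖v‖ ^ 2) t := by
        have := ((hasDerivAt_pow 2 t).const_mul (L / 2)).mul_const (‖v‖ ^ 2)
        simpa [mul_comm, mul_assoc, mul_left_comm] using this
      exact (ha.const_add (f x)).add hb
    exact h1.sub (hφ t)
  have hmono : MonotoneOn ψ (Set.Icc (0:ℝ) 1) := by
    apply monotoneOn_of_deriv_nonneg (convex_Icc 0 1)
    · exact Continuous.continuousOn
        (Differentiable.continuous (fun t => (hψ t).differentiableAt))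
    · intro t _
      exact (hψ t).differentiableAt.differentiableWithinAt
    · intro t ht
      rw [interior_Icc] at ht
      rw [(hψ t).deriv]
      have hip : ⟪gradient f (x + t • v) - gradient f x, v⟫ ≤ L * t * ‖v‖ ^ 2 := by
        calc ⟪gradient f (x + t • v) - gradient f x, v⟫
            ≤ ‖gradient f (x + t • v) - gradient f x‖ * ‖v‖ := real_inner_le_norm _ _
          _ ≤ (L * ‖(x + t • v) - x‖) * ‖v‖ := by
              have := hLip (x + t • v) x
              have hv : (0:ℝ) ≤ ‖v‖ := norm_nonneg _
              nlinarith [norm_nonneg (gradient f (x + t • v) - gradient f x)]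
          _ = L * t * ‖v‖ ^ 2 := by
              have : ‖(x + t • v) - x‖ = t * ‖v‖ := by
                rw [add_sub_cancel_left, norm_smul]
                simp [abs_of_pos ht.1]
              rw [this]; ring
      rw [inner_sub_left] at hip
      nlinarith
  have h01 := hmono (Set.left_mem_Icc.mpr one_pos.le) (Set.right_mem_Icc.mpr one_pos.le) one_pos.le
  simp only [hψdef] at h01
  simp only [zero_smul, add_zero, one_smul, one_mul] at h01
  nlinarith [h01]

variable {d m : ℕ}

lemma toEuclideanLin_mul_apply {a b c : Type*} [Fintype a] [Fintype b] [Fintype c]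
    [DecidableEq a] [DecidableEq b] [DecidableEq c]
    (A : Matrix a b ℝ) (B : Matrix b c ℝ) (v : EuclideanSpace ℝ c) :
    Matrix.toEuclideanLin (A * B) v = Matrix.toEuclideanLin A (Matrix.toEuclideanLin B v) := by
  simp [Matrix.toEuclideanLin_apply, Matrix.mulVec_mulVec]

lemma toEuclideanLin_one_apply (v : EuclideanSpace ℝ (Fin d)) :
    Matrix.toEuclideanLin (1 : Matrix (Fin d) (Fin d) ℝ) v = v := by
  simp [Matrix.toEuclideanLin_apply]

lemma toEuclideanLin_transpose_inner (J : Matrix (Fin m) (Fin d) ℝ)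
    (y : EuclideanSpace ℝ (Fin m)) (x : EuclideanSpace ℝ (Fin d)) :
    ⟪Matrix.toEuclideanLin Jᵀ y, x⟫ = ⟪y, Matrix.toEuclideanLin J x⟫ := by
  have h := Matrix.toEuclideanLin_conjTranspose_eq_adjoint (𝕜 := ℝ) J
  rw [Matrix.conjTranspose_eq_transpose_of_trivial] at h
  rw [h, LinearMap.adjoint_inner_left]

end Aux

set_option maxHeartbeats 1000000 in
open RealInnerProductSpace in
theorem stmt_4 {d m : ℕ} (L β α : ℝ) (hL : 0 < L) (hβ : 0 ≤ β) (hα : 0 < α)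
    (F : EuclideanSpace ℝ (Fin d) → EuclideanSpace ℝ (Fin m))
    (f : EuclideanSpace ℝ (Fin d) → ℝ)
    (hf : ∀ v, f v = (1 / 2 : ℝ) * ‖F v‖ ^ 2)
    (hdiff : ∀ v, DifferentiableAt ℝ f v)
    (hLip : ∀ x y, ‖gradient f x - gradient f y‖ ≤ L * ‖x - y‖)
    (u : EuclideanSpace ℝ (Fin d))
    (J : Matrix (Fin m) (Fin d) ℝ)
    (hJ : HasFDerivAt F (LinearMap.toContinuousLinearMap (Matrix.toEuclideanLin J)) u)
    (hJβ : ∀ v : EuclideanSpace ℝ (Fin d), ∀ J' : Matrix (Fin m) (Fin d) ℝ,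
      HasFDerivAt F (LinearMap.toContinuousLinearMap (Matrix.toEuclideanLin J')) v →
        ∀ w, ‖Matrix.toEuclideanLin J' w‖ ≤ β * ‖w‖)
    (uplus : EuclideanSpace ℝ (Fin d))
    (hup : uplus = u - Matrix.toEuclideanLin
      ((Jᵀ * J + α • (1 : Matrix (Fin d) (Fin d) ℝ))⁻¹) (gradient f u)) :
    f uplus ≤ f u - (1 / (β ^ 2 + α) - L / (2 * α ^ 2)) * ‖gradient f u‖ ^ 2 := by
  set g := gradient f u with hg
  set M := Jᵀ * J + α • (1 : Matrix (Fin d) (Fin d) ℝ) with hM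
  -- M is positive definite
  have hMpd : M.PosDef := by
    have h1 : (Jᵀ * J).PosSemidef := by
      have := Matrix.posSemidef_conjTranspose_mul_self J
      rwa [Matrix.conjTranspose_eq_transpose_of_trivial] at this
    have h2 : (α • (1 : Matrix (Fin d) (Fin d) ℝ)).PosDef := by
      rw [Matrix.smul_one_eq_diagonal]
      exact Matrix.posDef_diagonal_iff.mpr (fun _ => hα)
    exact Matrix.PosDef.posSemidef_add h1 h2
  have hdet : IsUnit M.det := hMpd.det_pos.ne'.isUnit
  set s := Matrix.toEuclideanLin M⁻¹ g with hs
  have hgs : Matrix.toEuclideanLin M s = g := by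
    rw [hs, ← toEuclideanLin_mul_apply, Matrix.mul_nonsing_inv M hdet, toEuclideanLin_one_apply]
  -- norm bounds
  have hJb : ∀ w, ‖Matrix.toEuclideanLin J w‖ ≤ β * ‖w‖ := hJβ u J hJ
  have hJtb : ∀ y : EuclideanSpace ℝ (Fin m), ‖Matrix.toEuclideanLin Jᵀ y‖ ≤ β * ‖y‖ := by
    intro y
    rcases eq_or_lt_of_le (norm_nonneg (Matrix.toEuclideanLin Jᵀ y)) with h0 | h0
    · rw [← h0]; positivity
    · have h1 : ‖Matrix.toEuclideanLin Jᵀ y‖ ^ 2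
          = ⟪y, Matrix.toEuclideanLin J (Matrix.toEuclideanLin Jᵀ y)⟫ := by
        rw [← toEuclideanLin_transpose_inner, real_inner_self_eq_norm_sq]
      have h2 : ⟪y, Matrix.toEuclideanLin J (Matrix.toEuclideanLin Jᵀ y)⟫
          ≤ ‖y‖ * (β * ‖Matrix.toEuclideanLin Jᵀ y‖) := by
        calc _ ≤ ‖y‖ * ‖Matrix.toEuclideanLin J (Matrix.toEuclideanLin Jᵀ y)‖ :=
              real_inner_le_norm _ _
          _ ≤ ‖y‖ * (β * ‖Matrix.toEuclideanLin Jᵀ y‖) := by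
              exact mul_le_mul_of_nonneg_left (hJb _) (norm_nonneg _)
      have h3 : ‖Matrix.toEuclideanLin Jᵀ y‖ ^ 2
          ≤ ‖y‖ * (β * ‖Matrix.toEuclideanLin Jᵀ y‖) := by rw [h1]; exact h2
      nlinarith [norm_nonneg y]
  -- decompose M action
  set w := Matrix.toEuclideanLin J s with hw
  have hTs : Matrix.toEuclideanLin M s = Matrix.toEuclideanLin Jᵀ w + α • s := by
    rw [hM, map_add, LinearMap.add_apply, toEuclideanLin_mul_apply, ← hw]
    congr 1
    simp [Matrix.toEuclideanLin_apply, Matrix.smul_mulVec, Matrix.one_mulVec]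
  have hinner1 : ⟪g, s⟫ = ‖w‖ ^ 2 + α * ‖s‖ ^ 2 := by
    rw [← hgs, hTs, inner_add_left, toEuclideanLin_transpose_inner, ← hw, real_inner_smul_left]
    simp only [real_inner_self_eq_norm_sq]
  have e1 : ⟪Matrix.toEuclideanLin Jᵀ w, s⟫ = ‖w‖ ^ 2 := by
    rw [toEuclideanLin_transpose_inner, ← hw, real_inner_self_eq_norm_sq]
  have hg2 : ‖g‖ ^ 2 = ‖Matrix.toEuclideanLin Jᵀ w‖ ^ 2 + 2 * α * ‖w‖ ^ 2 + α ^ 2 * ‖s‖ ^ 2 := by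
    rw [← hgs, hTs, ← real_inner_self_eq_norm_sq, real_inner_add_add_self]
    simp only [real_inner_smul_left, real_inner_smul_right, e1, real_inner_self_eq_norm_sq]
    rw [norm_smul, Real.norm_eq_abs, abs_of_pos hα]
    ring
  have hwb : ‖w‖ ≤ β * ‖s‖ := hJb s
  have hJtw : ‖Matrix.toEuclideanLin Jᵀ w‖ ≤ β * ‖w‖ := hJtb w
  -- key inequality 1 : ‖g‖² ≤ (β²+α) ⟪g,s⟫
  have hkey1 : ‖g‖ ^ 2 ≤ (β ^ 2 + α) * ⟪g, s⟫ := by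
    have ha2 : ‖Matrix.toEuclideanLin Jᵀ w‖ ^ 2 ≤ β ^ 2 * ‖w‖ ^ 2 := by
      nlinarith [norm_nonneg (Matrix.toEuclideanLin Jᵀ w), norm_nonneg w]
    have hw2 : ‖w‖ ^ 2 ≤ β ^ 2 * ‖s‖ ^ 2 := by
      nlinarith [norm_nonneg w, norm_nonneg s]
    have h4 : 0 ≤ α * (β ^ 2 * ‖s‖ ^ 2 - ‖w‖ ^ 2) :=
      mul_nonneg hα.le (by linarith)
    rw [hg2, hinner1]
    nlinarith [ha2, h4]
  -- key inequality 2 : α² ‖s‖² ≤ ‖g‖²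
  have hkey2 : α ^ 2 * ‖s‖ ^ 2 ≤ ‖g‖ ^ 2 := by
    have hcs : ⟪g, s⟫ ≤ ‖g‖ * ‖s‖ := real_inner_le_norm _ _
    have h1 : α * ‖s‖ ^ 2 ≤ ‖g‖ * ‖s‖ := by
      rw [hinner1] at hcs; nlinarith [sq_nonneg ‖w‖]
    rcases eq_or_lt_of_le (norm_nonneg s) with h0 | h0
    · rw [← h0]; simpa using sq_nonneg ‖g‖
    · have : α * ‖s‖ ≤ ‖g‖ := by
        have := mul_le_mul_of_nonneg_right h1 (le_of_lt (inv_pos.mpr h0))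
        calc α * ‖s‖ = α * ‖s‖ ^ 2 * ‖s‖⁻¹ := by field_simp
          _ ≤ ‖g‖ * ‖s‖ * ‖s‖⁻¹ := this
          _ = ‖g‖ := by field_simp
      nlinarith [norm_nonneg g, norm_nonneg s]
  -- descent
  have hdes := descent_lemma L f hdiff hLip u (-s)
  have huplus : uplus = u + (-s) := by rw [hup, hs]; abel
  rw [← huplus] at hdes
  rw [inner_neg_right, norm_neg] at hdes
  -- combine
  have hba : 0 < β ^ 2 + α := by positivity
  have hgi : ‖g‖ ^ 2 / (β ^ 2 + α) ≤ ⟪g, s⟫ := by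
    rw [div_le_iff₀ hba]
    nlinarith [hkey1]
  have hsb : L / 2 * ‖s‖ ^ 2 ≤ L / (2 * α ^ 2) * ‖g‖ ^ 2 := by
    have h2 : ‖s‖ ^ 2 ≤ ‖g‖ ^ 2 / α ^ 2 := by
      rw [le_div_iff₀ (by positivity)]; linarith [hkey2]
    calc L / 2 * ‖s‖ ^ 2 ≤ L / 2 * (‖g‖ ^ 2 / α ^ 2) :=
          mul_le_mul_of_nonneg_left h2 (le_of_lt (half_pos hL))
      _ = L / (2 * α ^ 2) * ‖g‖ ^ 2 := by field_simp
  have : f uplus ≤ f u - ‖g‖ ^ 2 / (β ^ 2 + α) + L / (2 * α ^ 2) * ‖g‖ ^ 2 := by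
    linarith
  calc f uplus ≤ f u - ‖g‖ ^ 2 / (β ^ 2 + α) + L / (2 * α ^ 2) * ‖g‖ ^ 2 := this
    _ = f u - (1 / (β ^ 2 + α) - L / (2 * α ^ 2)) * ‖g‖ ^ 2 := by ring
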